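/- There exists a constant K > 0 such that for every s ∈ ℕ and every root y₀ of He_{s+1}, the Lagrange basis polynomial L_{s;y₀} satisfies (∫_ℝ L_{s;y₀}(y)² dγ(y))^{1/2} ≤ e^{K s}. -/

import Mathlib

open ProbabilityTheory

/-- The Lagrange basis polynomial (as a function) associated with the root `y₀`
of the probabilist Hermite polynomial `He_{s+1}`:
`L_{s;y₀}(y) = ∏_{y' root of He_{s+1}, y' ≠ y₀} (y - y')/(y₀ - y')`. -/
noncomputable def lagrangeHermite (s : ℕ) (y₀ y : ℝ) : ℝ :=
  ∏ y' ∈ ((((Polynomial.hermite (s + 1)).map (Int.castRingHom ℝ)).roots).toFinset).erase y₀,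
    (y - y') / (y₀ - y')

open Polynomial MeasureTheory Filter Real ProbabilityTheory


noncomputable def G : ℝ → ℝ := fun x => Real.exp (-(x^2/2))

noncomputable def H (n : ℕ) : ℝ[X] := (Polynomial.hermite n).map (Int.castRingHom ℝ)

lemma G_pos (x : ℝ) : 0 < G x := Real.exp_pos _

lemma contG : Continuous G := by unfold G; fun_prop

lemma monic_H (n : ℕ) : (H n).Monic := (Polynomial.hermite_monic n).map _

lemma natDegree_H (n : ℕ) : (H n).natDegree = n := by
  rw [H, natDegree_map_eq_of_injective Int.cast_injective]
  exact Polynomial.natDegree_hermite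

lemma H_ne_zero (n : ℕ) : H n ≠ 0 := (monic_H n).ne_zero

lemma G_eq (x : ℝ) : G x = Real.exp (-(1/2) * x ^ 2) := by
  unfold G; ring_nf

lemma integrable_monomial_G (n : ℕ) : Integrable (fun x : ℝ => x ^ n * G x) := by
  have h := integrable_rpow_mul_exp_neg_mul_sq (b := 1/2) (by norm_num) (s := (n : ℝ))
    (lt_of_lt_of_le neg_one_lt_zero (Nat.cast_nonneg n))
  simp only [Real.rpow_natCast] at h
  refine h.congr ?_
  filter_upwards with x
  rw [G_eq]

lemma integrable_poly_G (p : ℝ[X]) : Integrable (fun x : ℝ => p.eval x * G x) := by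
  induction p using Polynomial.induction_on' with
  | add p q hp hq =>
    simpa [eval_add, add_mul, Pi.add_def] using hp.add hq
  | monomial n a =>
    simpa [eval_monomial, mul_assoc] using (integrable_monomial_G n).const_mul a

lemma H_succ (n : ℕ) : H (n+1) = X * H n - derivative (H n) := by
  unfold H
  rw [Polynomial.hermite_succ, Polynomial.map_sub, Polynomial.map_mul, map_X, derivative_map]

lemma hasDerivAt_G (x : ℝ) : HasDerivAt G (-x * G x) x := by
  have h : HasDerivAt (fun y : ℝ => -(y^2/2)) (-x) x := by
    have := ((hasDerivAt_pow 2 x).div_const 2).neg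
    exact this.congr_deriv (by norm_num)
  unfold G; simpa [mul_comm] using h.exp

lemma hasDerivAt_H_mul_G (n : ℕ) (x : ℝ) :
    HasDerivAt (fun y => (H n).eval y * G y) (-((H (n+1)).eval x * G x)) x := by
  have h := ((H n).hasDerivAt x).mul (hasDerivAt_G x)
  refine h.congr_deriv ?_
  rw [H_succ]
  simp [eval_mul]
  ring

lemma ibp (p : ℝ[X]) (n : ℕ) :
    ∫ x, p.eval x * ((H (n+1)).eval x * G x) =
    ∫ x, (derivative p).eval x * ((H n).eval x * G x) := by
  have key := MeasureTheory.integral_mul_deriv_eq_deriv_mul_of_integrable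
    (u := fun x => p.eval x) (u' := fun x => (derivative p).eval x)
    (v := fun x => (H n).eval x * G x) (v' := fun x => -((H (n+1)).eval x * G x))
    (fun x _ => p.hasDerivAt x) (fun x _ => hasDerivAt_H_mul_G n x)
    ?_ ?_ ?_
  · have : ∫ x, p.eval x * -((H (n+1)).eval x * G x) =
        -∫ x, p.eval x * ((H (n+1)).eval x * G x) := by
      rw [← integral_neg]; congr 1; funext x; ring
    rw [this] at key
    have h2 : ∫ x, (derivative p).eval x * ((H n).eval x * G x) =
        ∫ x, (fun x => (derivative p).eval x) x * (fun x => (H n).eval x * G x) x := rfl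
    linarith [key]
  · have := (integrable_poly_G (p * H (n+1))).neg
    refine this.congr ?_
    filter_upwards with x
    simp [Pi.mul_apply, eval_mul]; ring
  · have := integrable_poly_G (derivative p * H n)
    refine this.congr ?_
    filter_upwards with x
    simp [Pi.mul_apply, eval_mul]; ring
  · have := integrable_poly_G (p * H n)
    refine this.congr ?_
    filter_upwards with x
    simp [Pi.mul_apply, eval_mul]; ring

lemma orth (n : ℕ) : ∀ (p : ℝ[X]), p.natDegree < n →
    ∫ x, p.eval x * ((H n).eval x * G x) = 0 := by
  induction n with
  | zero => exact fun p hp => absurd hp (Nat.not_lt_zero _)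
  | succ n ih =>
    intro p hp
    rw [ibp p n]
    by_cases hd : derivative p = 0
    · simp [hd]
    · refine ih _ ?_
      have h1 := Polynomial.natDegree_derivative_lt (p := p) ?_
      · omega
      · intro h0
        exact hd (by
          have := Polynomial.natDegree_eq_zero.mp h0
          obtain ⟨a, rfl⟩ := this
          simp)

lemma integral_poly_G_pos (p : ℝ[X]) (hp : p ≠ 0) (hnn : ∀ x, 0 ≤ p.eval x) :
    0 < ∫ x, p.eval x * G x := by
  rw [integral_pos_iff_support_of_nonneg]
  · have hsub : {x : ℝ | p.IsRoot x}ᶜ ⊆ Function.support fun x => p.eval x * G x := by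
      intro x hx
      simp only [Set.mem_compl_iff, Set.mem_setOf_eq, IsRoot] at hx
      exact mul_ne_zero hx (G_pos x).ne'
    have hfin : volume {x : ℝ | p.IsRoot x} = 0 :=
      (Polynomial.finite_setOf_isRoot hp).measure_zero _
    have htop : (⊤ : ENNReal) ≤ volume {x : ℝ | p.IsRoot x}ᶜ := by
      calc (⊤ : ENNReal) = volume (Set.univ : Set ℝ) := Real.volume_univ.symm
      _ = volume ({x : ℝ | p.IsRoot x} ∪ {x : ℝ | p.IsRoot x}ᶜ) := by
          rw [Set.union_compl_self]
      _ ≤ volume {x : ℝ | p.IsRoot x} + volume {x : ℝ | p.IsRoot x}ᶜ := measure_union_le _ _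
      _ = volume {x : ℝ | p.IsRoot x}ᶜ := by rw [hfin, zero_add]
    calc (0 : ENNReal) < ⊤ := by simp
    _ ≤ volume {x : ℝ | p.IsRoot x}ᶜ := htop
    _ ≤ volume (Function.support fun x => p.eval x * G x) := measure_mono hsub
  · exact fun x => mul_nonneg (hnn x) (G_pos x).le
  · exact integrable_poly_G p

lemma sign_const (u : ℝ[X]) (hu : ∀ x, u.eval x ≠ 0) :
    (∀ x, 0 < u.eval x) ∨ (∀ x, u.eval x < 0) := by
  have hcont : Continuous fun y : ℝ => u.eval y := u.continuous
  rcases (hu 0).lt_or_gt with h0 | h0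
  · right; intro x
    by_contra hx
    have hx' : 0 < u.eval x := ((hu x).lt_or_gt).resolve_left (by simpa using hx)
    have hmem : (0 : ℝ) ∈ Set.uIcc (u.eval 0) (u.eval x) :=
      Set.mem_uIcc.mpr (Or.inl ⟨h0.le, hx'.le⟩)
    obtain ⟨c, _, hc⟩ := intermediate_value_uIcc (a := 0) (b := x) hcont.continuousOn hmem
    exact hu c hc
  · left; intro x
    by_contra hx
    have hx' : u.eval x < 0 := ((hu x).lt_or_gt).resolve_right (by simpa using hx)
    have hmem : (0 : ℝ) ∈ Set.uIcc (u.eval 0) (u.eval x) :=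
      Set.mem_uIcc.mpr (Or.inr ⟨hx'.le, h0.le⟩)
    obtain ⟨c, _, hc⟩ := intermediate_value_uIcc (a := 0) (b := x) hcont.continuousOn hmem
    exact hu c hc

lemma roots_H (s : ℕ) :
    (H (s+1)).roots.toFinset.card = s + 1 ∧
    H (s+1) = ∏ x ∈ (H (s+1)).roots.toFinset, (X - C x) := by
  classical
  set n := s + 1 with hn
  set P := H n with hPdef
  have hP0 : P ≠ 0 := H_ne_zero n
  have hPmonic : P.Monic := monic_H n
  have hPdeg : P.natDegree = n := natDegree_H n
  obtain ⟨u, hu_eq, hu_deg, hu_roots⟩ := P.exists_prod_multiset_X_sub_C_mul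
  have hu0 : u ≠ 0 := by
    rintro rfl; rw [mul_zero] at hu_eq; exact hP0 hu_eq.symm
  have hu_ne : ∀ x, u.eval x ≠ 0 := by
    intro x hx
    have hmem : x ∈ u.roots := by
      rw [mem_roots hu0]; exact hx
    rw [hu_roots] at hmem
    simp at hmem
  set T := P.roots.toFinset with hT
  set c : ℝ → ℕ := fun r => P.roots.count r with hc
  set Todd := T.filter (fun x => Odd (c x)) with hToddDef
  set q := Lagrange.nodal Todd (id : ℝ → ℝ) with hqdef
  have hq0 : q ≠ 0 := Lagrange.nodal_ne_zero
  have hqdeg : q.natDegree = Todd.card := Lagrange.natDegree_nodal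
  -- pointwise evaluations
  have hPeval : ∀ x, P.eval x = (∏ r ∈ T, (x - r) ^ c r) * u.eval x := by
    intro x
    conv_lhs => rw [← hu_eq]
    rw [eval_mul, eval_multiset_prod, Multiset.map_map]
    have hcomp : (eval x ∘ fun a : ℝ => X - C a) = fun a : ℝ => x - a := by
      funext a; simp
    rw [hcomp, Finset.prod_multiset_map_count]
  have hqProd_nonneg : ∀ x, 0 ≤ q.eval x * ∏ r ∈ T, (x - r) ^ c r := by
    intro x
    rw [Lagrange.eval_nodal]
    simp only [id]
    rw [hToddDef, Finset.prod_filter, ← Finset.prod_mul_distrib]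
    apply Finset.prod_nonneg
    intro r _
    by_cases h : Odd (c r)
    · simp only [h, if_true]
      rw [← pow_succ']
      exact (Odd.add_one h).pow_nonneg _
    · simp only [h, if_false, one_mul]
      exact (Nat.not_odd_iff_even.mp h).pow_nonneg _
  -- sign of u
  obtain ⟨ε, hε1, hεsign⟩ : ∃ ε : ℝ, ε ≠ 0 ∧ ∀ x, 0 < ε * u.eval x := by
    rcases sign_const u hu_ne with h | h
    · exact ⟨1, one_ne_zero, fun x => by simpa using h x⟩
    · exact ⟨-1, by norm_num, fun x => by simpa using (h x)⟩
  -- the nonneg polynomial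
  set w : ℝ[X] := C ε * (q * P) with hw
  have hw0 : w ≠ 0 := by
    apply mul_ne_zero (by simpa using hε1) (mul_ne_zero hq0 hP0)
  have hwnn : ∀ x, 0 ≤ w.eval x := by
    intro x
    rw [hw, eval_mul, eval_mul, eval_C, hPeval x]
    calc (0:ℝ) ≤ (q.eval x * ∏ r ∈ T, (x - r) ^ c r) * (ε * u.eval x) :=
      mul_nonneg (hqProd_nonneg x) (hεsign x).le
    _ = ε * (q.eval x * ((∏ r ∈ T, (x - r) ^ c r) * u.eval x)) := by ring
  -- orthogonality contradiction if Todd.card < n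
  have hge : n ≤ Todd.card := by
    by_contra hlt
    push_neg at hlt
    have h1 : (C ε * q).natDegree < n := by
      rwa [natDegree_C_mul hε1, hqdeg]
    have h2 := orth n (C ε * q) h1
    have h3 : (fun x => (C ε * q).eval x * (P.eval x * G x))
        = fun x => w.eval x * G x := by
      funext x
      rw [hw]
      simp only [eval_mul, eval_C]
      ring
    rw [h3] at h2
    exact absurd h2 (integral_poly_G_pos w hw0 hwnn).ne'
  have hTcard : T.card ≤ n := le_trans (Multiset.toFinset_card_le _)
    (le_trans (Polynomial.card_roots' P) (le_of_eq hPdeg))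
  have hToddT : Todd.card ≤ T.card := Finset.card_filter_le _ _
  have hTn : T.card = n := le_antisymm hTcard (le_trans hge hToddT)
  have hRcard : Multiset.card P.roots = n :=
    le_antisymm (le_trans (Polynomial.card_roots' P) (le_of_eq hPdeg))
      (le_trans hge (le_trans hToddT (Multiset.toFinset_card_le _)))
  have hnodup : P.roots.Nodup :=
    Multiset.toFinset_card_eq_card_iff_nodup.mp (by rw [hTn, hRcard])
  have hprodP : (P.roots.map fun a => X - C a).prod = P :=
    prod_multiset_X_sub_C_of_monic_of_roots_card_eq hPmonic (by rw [hRcard, hPdeg])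
  refine ⟨hTn, ?_⟩
  rw [← hprodP, Finset.prod_eq_multiset_prod]
  congr 1
  rw [hT, Multiset.toFinset_val, Multiset.dedup_eq_self.mpr hnodup]

lemma gaussian_integral_eq (f : ℝ → ℝ) :
    ∫ x, f x ∂(gaussianReal 0 1) = ∫ x, gaussianPDFReal 0 1 x * f x := by
  rw [gaussianReal_of_var_ne_zero 0 one_ne_zero]
  have hd : gaussianPDF 0 1 = fun x => ((gaussianPDFReal 0 1 x).toNNReal : ENNReal) := by
    funext x; rw [gaussianPDF]; rfl
  rw [hd, integral_withDensity_eq_integral_smul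
    ((measurable_gaussianPDFReal 0 1).real_toNNReal) f]
  congr 1
  funext x
  rw [NNReal.smul_def, smul_eq_mul, Real.coe_toNNReal _ (gaussianPDFReal_nonneg 0 1 x)]

lemma gaussianPDFReal_eq (x : ℝ) :
    gaussianPDFReal 0 1 x = (Real.sqrt (2 * π))⁻¹ * Real.exp (-(x^2/2)) := by
  rw [gaussianPDFReal]
  norm_num
  left; ring

lemma integral_G : ∫ x, G x = Real.sqrt (2 * π) := by
  have h1 := integral_gaussianPDFReal_eq_one 0 one_ne_zero
  have h2 : ∫ x, gaussianPDFReal 0 1 x = (Real.sqrt (2 * π))⁻¹ * ∫ x, G x := by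
    rw [← MeasureTheory.integral_const_mul]
    congr 1
    funext x
    rw [gaussianPDFReal_eq]; rfl
  rw [h2] at h1
  have hpos : (0:ℝ) < Real.sqrt (2 * π) := Real.sqrt_pos.mpr (by positivity)
  field_simp at h1
  rw [Real.sqrt_mul (by positivity : (0:ℝ) ≤ 2)] at h1 ⊢
  linarith

lemma main_bound (s : ℕ) (y₀ : ℝ)
    (hy₀ : y₀ ∈ (H (s+1)).roots.toFinset) :
    ∫ y, (lagrangeHermite s y₀ y)^2 ∂(gaussianReal 0 1) ≤ 1 := by
  classical
  obtain ⟨hTcard, hPprod⟩ := roots_H s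
  set n := s + 1 with hn
  set P := H n with hPdef
  set T := P.roots.toFinset with hT
  have hinj : Set.InjOn (id : ℝ → ℝ) ↑T := Set.injOn_id _
  set B : ℝ → ℝ[X] := fun i => Lagrange.basis T id i with hB
  have hLag : ∀ y, lagrangeHermite s y₀ y = (B y₀).eval y := by
    intro y
    rw [lagrangeHermite]
    have hBeq : B y₀ = ∏ j ∈ T.erase y₀, Lagrange.basisDivisor (id y₀) (id j) := rfl
    rw [hBeq, eval_prod]
    apply Finset.prod_congr rfl
    intro j hj
    rw [Lagrange.basisDivisor, eval_mul, eval_C, eval_sub, eval_X, eval_C]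
    rw [div_eq_inv_mul]
    simp only [id_eq]
  have hdvd : ∀ i ∈ T, P ∣ (B i)^2 - B i := by
    intro i hi
    rw [hPprod]
    apply Finset.prod_dvd_of_coprime
    · intro x hx y hy hxy
      exact isCoprime_X_sub_C_of_isUnit_sub
        (isUnit_iff_ne_zero.mpr (sub_ne_zero_of_ne hxy))
    · intro x hx
      rw [dvd_iff_isRoot]
      simp only [IsRoot, eval_sub, eval_pow]
      by_cases hxi : x = i
      · subst hxi
        have h1 : (B x).eval (id x) = 1 := Lagrange.eval_basis_self hinj hx
        simp only [id] at h1
        rw [h1]; ring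
      · have h0 : (B i).eval (id x) = 0 :=
          Lagrange.eval_basis_of_ne (fun h => hxi (h.symm)) hx
        simp only [id] at h0
        rw [h0]; ring
  have hBdeg : ∀ i ∈ T, (B i).natDegree = s := by
    intro i hi
    rw [hB, Lagrange.natDegree_basis hinj hi, hTcard]
    omega
  have hIsq : ∀ i ∈ T, ∫ x, ((B i).eval x)^2 * G x = ∫ x, (B i).eval x * G x := by
    intro i hi
    obtain ⟨w, hw⟩ := hdvd i hi
    have hwdeg : w.natDegree < n := by
      by_cases hw0 : w = 0
      · rw [hw0, natDegree_zero]; omega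
      · have h1 : (P * w).natDegree = n + w.natDegree := by
          rw [natDegree_mul (H_ne_zero n) hw0, natDegree_H]
        have h2 : ((B i)^2 - B i).natDegree ≤ 2 * s := by
          refine le_trans (natDegree_sub_le _ _) ?_
          rw [natDegree_pow, hBdeg i hi]
          omega
        rw [← hw] at h1
        omega
    have heq : (fun x => ((B i).eval x)^2 * G x)
        = fun x => w.eval x * (P.eval x * G x) + (B i).eval x * G x := by
      funext x
      have h3 : ((B i).eval x)^2 - (B i).eval x = P.eval x * w.eval x := by
        have := congrArg (eval x) hw
        simpa [eval_sub, eval_pow, eval_mul] using this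
      have h4 : (eval x (B i))^2 = eval x P * eval x w + eval x (B i) := by linarith
      rw [h4]; ring
    rw [heq, integral_add]
    · rw [orth n w hwdeg, zero_add]
    · exact (integrable_poly_G (w * P)).congr
        (Filter.Eventually.of_forall fun x => by simp only [eval_mul]; ring)
    · exact (integrable_poly_G (B i)).congr
        (Filter.Eventually.of_forall fun x => rfl)
  have hTne : T.Nonempty := Finset.card_pos.mp (by rw [hTcard]; omega)
  have hsum : ∑ i ∈ T, ∫ x, (B i).eval x * G x = Real.sqrt (2 * π) := by
    rw [← integral_finset_sum]
    · have : (fun x => ∑ i ∈ T, (B i).eval x * G x) = G := by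
        funext x
        rw [← Finset.sum_mul]
        have h4 : ∑ i ∈ T, (B i).eval x = 1 := by
          rw [← eval_finset_sum, hB]
          rw [Lagrange.sum_basis hinj hTne]
          simp
        rw [h4, one_mul]
      rw [this, integral_G]
    · intro i hi
      exact (integrable_poly_G (B i)).congr
        (Filter.Eventually.of_forall fun x => rfl)
  have hnneg : ∀ i ∈ T, 0 ≤ ∫ x, (B i).eval x * G x := by
    intro i hi
    rw [← hIsq i hi]
    exact integral_nonneg fun x => mul_nonneg (sq_nonneg _) (G_pos x).le
  have hle : ∫ x, (B y₀).eval x * G x ≤ Real.sqrt (2 * π) := by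
    rw [← hsum]
    exact Finset.single_le_sum hnneg hy₀
  have hsqrtpos : (0:ℝ) < Real.sqrt (2 * π) := Real.sqrt_pos.mpr (by positivity)
  have hmeas : ∫ y, (lagrangeHermite s y₀ y)^2 ∂(gaussianReal 0 1)
      = (Real.sqrt (2 * π))⁻¹ * ∫ x, ((B y₀).eval x)^2 * G x := by
    rw [gaussian_integral_eq, ← MeasureTheory.integral_const_mul]
    congr 1
    funext x
    rw [gaussianPDFReal_eq, hLag]
    unfold G
    ring
  rw [hmeas, hIsq y₀ hy₀]
  calc (Real.sqrt (2 * π))⁻¹ * ∫ x, (B y₀).eval x * G x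
      ≤ (Real.sqrt (2 * π))⁻¹ * Real.sqrt (2 * π) :=
        mul_le_mul_of_nonneg_left hle (by positivity)
    _ = 1 := inv_mul_cancel₀ hsqrtpos.ne'

/-- Lemma A.4, inequality (norm-L_2): there is `K > 0` such that
for every `s ≥ 1` and every root `y₀` of `He_{s+1}`,
`(∫_ℝ L_{s;y₀}(y)² dγ(y))^{1/2} ≤ e^{Ks}` where `γ` is the standard Gaussian
measure on `ℝ`. -/
theorem stmt_9 :
    ∃ K > (0 : ℝ), ∀ s : ℕ, 1 ≤ s →
      ∀ y₀ ∈ (((Polynomial.hermite (s + 1)).map (Int.castRingHom ℝ)).roots).toFinset,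
        Real.sqrt (∫ y, lagrangeHermite s y₀ y ^ 2 ∂(gaussianReal 0 1)) ≤
          Real.exp (K * s) := by
  refine ⟨1, one_pos, ?_⟩
  intro s _hs y₀ hy₀
  have hb := main_bound s y₀ hy₀
  calc Real.sqrt (∫ y, lagrangeHermite s y₀ y ^ 2 ∂(gaussianReal 0 1))
      ≤ Real.sqrt 1 := Real.sqrt_le_sqrt hb
    _ = 1 := Real.sqrt_one
    _ ≤ Real.exp (1 * s) := by
        rw [one_mul]
        exact Real.one_le_exp (by positivity)
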